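/- Let m ∈ {1,2}, k ≥ 1 with k ≠ m/2, n = 6m, and λ₁ > √3 with λ₁ ∉ {√3} (so all six values are defined). Set λ₂ = (√3λ₁−1)/(√3+λ₁), λ₃ = (λ₁−√3)/(1+√3λ₁), λ₄ = −1/λ₁, λ₅ = (λ₁+√3)/(1−√3λ₁), λ₆ = (√3λ₁+1)/(√3−λ₁), each with multiplicity m. Then the k-extremal equation ∑_i λ_i³ + (n²/(2k))H³ − (n/(2k)+1)HS = 0 holds if and only if λ₁ = 2+√3. -/

import Mathlib

set_option maxHeartbeats 2000000 in
theorem iso_g6_k_extremal (m : ℕ) (hm : m = 1 ∨ m = 2) (k : ℝ) (hk : 1 ≤ k)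
    (hk2 : k ≠ m / 2) (n : ℕ) (hn : n = 6 * m)
    (lam1 : ℝ) (hlam1 : Real.sqrt 3 < lam1)
    (lam2 lam3 lam4 lam5 lam6 H S : ℝ)
    (hlam2 : lam2 = (Real.sqrt 3 * lam1 - 1) / (Real.sqrt 3 + lam1))
    (hlam3 : lam3 = (lam1 - Real.sqrt 3) / (1 + Real.sqrt 3 * lam1))
    (hlam4 : lam4 = -1 / lam1)
    (hlam5 : lam5 = (lam1 + Real.sqrt 3) / (1 - Real.sqrt 3 * lam1))
    (hlam6 : lam6 = (Real.sqrt 3 * lam1 + 1) / (Real.sqrt 3 - lam1))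
    (hH : n * H = m * (lam1 + lam2 + lam3 + lam4 + lam5 + lam6))
    (hS : S = m * (lam1 ^ 2 + lam2 ^ 2 + lam3 ^ 2 + lam4 ^ 2 + lam5 ^ 2 + lam6 ^ 2)) :
    m * (lam1 ^ 3 + lam2 ^ 3 + lam3 ^ 3 + lam4 ^ 3 + lam5 ^ 3 + lam6 ^ 3)
        + n ^ 2 / (2 * k) * H ^ 3 - (n / (2 * k) + 1) * H * S = 0 ↔
      lam1 = 2 + Real.sqrt 3 := by
  subst hn
  set s := Real.sqrt 3 with hsdef
  set t := lam1 with htdef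
  have hs : s ^ 2 = 3 := Real.sq_sqrt (by norm_num)
  have hs0 : 0 ≤ s := Real.sqrt_nonneg 3
  have hs1 : 1 < s := by
    have h1 : Real.sqrt 1 < Real.sqrt 3 := Real.sqrt_lt_sqrt (by norm_num) (by norm_num)
    simpa using h1
  have ht1 : 1 < t := lt_trans hs1 hlam1
  have ht0 : 0 < t := lt_trans one_pos ht1
  have ht : t ≠ 0 := ne_of_gt ht0
  have htt : 3 < t ^ 2 := by
    rw [← hs]; exact pow_lt_pow_left₀ hlam1 hs0 (by norm_num)
  have htt1 : 1 < t ^ 2 := by linarith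
  have h3mt : 3 - t ^ 2 ≠ 0 := ne_of_lt (sub_neg.mpr htt)
  have h13t : 1 - 3 * t ^ 2 ≠ 0 := ne_of_lt (sub_neg.mpr (by linarith))
  have hspt : s + t ≠ 0 := by positivity
  have hsmt : s - t ≠ 0 := ne_of_lt (sub_neg.mpr hlam1)
  have h1pst : 1 + s * t ≠ 0 := by positivity
  have hst1 : (1:ℝ) < s * t := by
    calc (1:ℝ) = 1 * 1 := by norm_num
    _ < s * t := mul_lt_mul'' hs1 ht1 (by norm_num) (by norm_num)
  have h1mst : 1 - s * t ≠ 0 := ne_of_lt (sub_neg.mpr hst1)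
  have hM0 : (0:ℝ) < (m:ℝ) := by rcases hm with rfl | rfl <;> norm_num
  have hk0 : (0:ℝ) < k := lt_of_lt_of_le one_pos hk
  have hkne : k ≠ 0 := ne_of_gt hk0
  have hkM : 2 * k - (m:ℝ) ≠ 0 := by
    intro h; apply hk2; linarith
  -- pair lemmas
  have ha : lam1 + lam4 = (t ^ 2 - 1) / t := by
    rw [hlam4]; field_simp; ring
  have ha2 : lam1 * lam4 = -1 := by
    rw [hlam4]; field_simp; rfl
  have hb : lam2 + lam6 = 8 * t / (3 - t ^ 2) := by
    rw [hlam2, hlam6, div_add_div _ _ hspt hsmt,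
      div_eq_div_iff (mul_ne_zero hspt hsmt) h3mt]
    linear_combination (-2 * t * (t ^ 2 + 1)) * hs
  have hb2 : lam2 * lam6 = (3 * t ^ 2 - 1) / (3 - t ^ 2) := by
    rw [hlam2, hlam6, div_mul_div_comm,
      div_eq_div_iff (mul_ne_zero hspt hsmt) h3mt]
    linear_combination (1 - t ^ 4) * hs
  have hc : lam3 + lam5 = 8 * t / (1 - 3 * t ^ 2) := by
    rw [hlam3, hlam5, div_add_div _ _ h1pst h1mst,
      div_eq_div_iff (mul_ne_zero h1pst h1mst) h13t]
    linear_combination (2 * t * (1 + t ^ 2)) * hs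
  have hc2 : lam3 * lam5 = (t ^ 2 - 3) / (1 - 3 * t ^ 2) := by
    rw [hlam3, hlam5, div_mul_div_comm,
      div_eq_div_iff (mul_ne_zero h1pst h1mst) h13t]
    linear_combination (t ^ 4 - 1) * hs
  set A : ℝ := (t ^ 2 - 1) / t with hA
  set B : ℝ := 8 * t / (3 - t ^ 2) with hB
  set C : ℝ := 8 * t / (1 - 3 * t ^ 2) with hC
  set PB : ℝ := (3 * t ^ 2 - 1) / (3 - t ^ 2) with hPB
  set PC : ℝ := (t ^ 2 - 3) / (1 - 3 * t ^ 2) with hPC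
  have hsum1 : lam1 + lam2 + lam3 + lam4 + lam5 + lam6 = A + B + C := by
    linear_combination ha + hb + hc
  have hsum2 : lam1 ^ 2 + lam2 ^ 2 + lam3 ^ 2 + lam4 ^ 2 + lam5 ^ 2 + lam6 ^ 2
      = A ^ 2 + B ^ 2 + C ^ 2 + 2 - 2 * PB - 2 * PC := by
    linear_combination (lam1 + lam4 + A) * ha + (lam2 + lam6 + B) * hb
      + (lam3 + lam5 + C) * hc - 2 * ha2 - 2 * hb2 - 2 * hc2
  have hsum3 : lam1 ^ 3 + lam2 ^ 3 + lam3 ^ 3 + lam4 ^ 3 + lam5 ^ 3 + lam6 ^ 3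
      = (A ^ 3 + 3 * A) + (B ^ 3 - 3 * PB * B) + (C ^ 3 - 3 * PC * C) := by
    linear_combination
      ((lam1 + lam4) ^ 2 + (lam1 + lam4) * A + A ^ 2 - 3 * (lam1 * lam4)) * ha
        - 3 * A * ha2
      + ((lam2 + lam6) ^ 2 + (lam2 + lam6) * B + B ^ 2 - 3 * (lam2 * lam6)) * hb
        - 3 * B * hb2
      + ((lam3 + lam5) ^ 2 + (lam3 + lam5) * C + C ^ 2 - 3 * (lam3 * lam5)) * hc
        - 3 * C * hc2
  have h6M : (6 * (m:ℝ)) ≠ 0 := by positivity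
  have hH6 : H = (A + B + C) / 6 := by
    apply mul_left_cancel₀ h6M
    push_cast at hH
    linear_combination hH + (m:ℝ) * hsum1
  rw [hsum3, hH6, hS, hsum2]
  have hkey : (m:ℝ) * ((A ^ 3 + 3 * A) + (B ^ 3 - 3 * PB * B) + (C ^ 3 - 3 * PC * C))
        + ((6 * m : ℕ):ℝ) ^ 2 / (2 * k) * ((A + B + C) / 6) ^ 3
        - (((6 * m : ℕ):ℝ) / (2 * k) + 1) * ((A + B + C) / 6)
          * ((m:ℝ) * (A ^ 2 + B ^ 2 + C ^ 2 + 2 - 2 * PB - 2 * PC))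
      = ((m:ℝ) * (2 * k - (m:ℝ)) / (2 * k)) * ((t ^ 2 - 4 * t + 1) *
          ((45 / 2) * ((t ^ 2 + 4 * t + 1) * (t ^ 2 - 1) * (t ^ 2 + 1) ^ 6)
            / (t ^ 3 * (3 - t ^ 2) ^ 3 * (1 - 3 * t ^ 2) ^ 3))) := by
    rw [hA, hB, hC, hPB, hPC]
    push_cast
    have h13t' : 1 - t ^ 2 * 3 ≠ 0 := by rwa [mul_comm]
    field_simp
    ring
  rw [hkey]
  have hCne : (m:ℝ) * (2 * k - (m:ℝ)) / (2 * k) ≠ 0 := by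
    apply div_ne_zero (mul_ne_zero (ne_of_gt hM0) hkM) (by positivity)
  have hpos : 0 < (45 / 2 : ℝ) * ((t ^ 2 + 4 * t + 1) * (t ^ 2 - 1) * (t ^ 2 + 1) ^ 6)
      / (t ^ 3 * (3 - t ^ 2) ^ 3 * (1 - 3 * t ^ 2) ^ 3) := by
    have hden : t ^ 3 * (3 - t ^ 2) ^ 3 * (1 - 3 * t ^ 2) ^ 3
        = (t * ((t ^ 2 - 3) * (3 * t ^ 2 - 1))) ^ 3 := by ring
    rw [hden]
    have h1 : 0 < t ^ 2 - 3 := sub_pos.mpr htt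
    have h2 : 0 < 3 * t ^ 2 - 1 := sub_pos.mpr (by linarith)
    have h3 : 0 < t ^ 2 - 1 := sub_pos.mpr htt1
    positivity
  have hiff : ((m:ℝ) * (2 * k - (m:ℝ)) / (2 * k)) * ((t ^ 2 - 4 * t + 1) *
          ((45 / 2) * ((t ^ 2 + 4 * t + 1) * (t ^ 2 - 1) * (t ^ 2 + 1) ^ 6)
            / (t ^ 3 * (3 - t ^ 2) ^ 3 * (1 - 3 * t ^ 2) ^ 3))) = 0
      ↔ t ^ 2 - 4 * t + 1 = 0 := by
    rw [mul_eq_zero, mul_eq_zero]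
    constructor
    · rintro (h | h | h)
      · exact absurd h hCne
      · exact h
      · exact absurd h (ne_of_gt hpos)
    · intro h; exact Or.inr (Or.inl h)
  rw [hiff]
  constructor
  · intro hq
    have hfac : (t - (2 + s)) * (t - (2 - s)) = 0 := by
      linear_combination hq - hs
    rcases mul_eq_zero.mp hfac with h' | h'
    · linarith
    · exfalso; linarith
  · intro h
    rw [h]; linear_combination hs
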